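/- Let K_l(β) be a family of symmetric positive semi-definite l×l correlation matrices tending to a singular matrix as β → ∞, let X be the block-diagonal nl×kl matrix of Stiefel matrices X_i, and let X_⊥ be an nl×(nl−kl) orthonormal completion. Then the objective h(β) = n log|K_l| + log|X^T(K_l^{-1} ⊗ I_n)X| satisfies h(β) = log|X_⊥^T (K_l ⊗ I_n) X_⊥|; in particular h tends to −∞ as K_l tends to a singular matrix, so maximizing the modified marginal likelihood selects a singular covariance matrix. -/

import Mathlib

open Matrix Kronecker

lemma aux_posDef_kron {n l : ℕ} {B : Matrix (Fin l) (Fin l) ℝ} (hB : B.PosDef) :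
    ((1 : Matrix (Fin n) (Fin n) ℝ) ⊗ₖ B).PosDef := by
  have hBs : ∀ a b, B b a = B a b := by
    intro a b
    conv_lhs => rw [← hB.isHermitian.eq]
    rfl
  refine posDef_iff_dotProduct_mulVec.mpr ⟨?_, ?_⟩
  · show _ = _
    ext ⟨i, j⟩ ⟨i', j'⟩
    rcases eq_or_ne i i' with h | h
    · simp [conjTranspose_apply, kroneckerMap_apply, one_apply, hBs j j', h]
    · simp [conjTranspose_apply, kroneckerMap_apply, one_apply, h, Ne.symm h]
  · intro x hx
    have key : star x ⬝ᵥ (((1 : Matrix (Fin n) (Fin n) ℝ) ⊗ₖ B) *ᵥ x)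
        = ∑ i : Fin n, (fun j => x (i, j)) ⬝ᵥ (B *ᵥ fun j => x (i, j)) := by
      simp only [star_trivial, dotProduct, mulVec, Fintype.sum_prod_type,
        kroneckerMap_apply, one_apply, ite_mul, zero_mul, Finset.mul_sum]
      refine Finset.sum_congr rfl fun i _ => Finset.sum_congr rfl fun j _ => ?_
      rw [Finset.sum_comm]
      simp [Finset.sum_ite_eq]
    rw [key]
    obtain ⟨⟨i0, j0⟩, h0⟩ := Function.ne_iff.mp hx
    refine Finset.sum_pos' (fun i _ => ?_) ⟨i0, Finset.mem_univ _, ?_⟩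
    · simpa [star_trivial] using hB.posSemidef.dotProduct_mulVec_nonneg (fun j => x (i, j))
    · refine lt_of_lt_of_le ?_ le_rfl
      have : (fun j => x (i0, j)) ≠ 0 := by
        intro h; exact h0 (congrFun h j0)
      simpa [star_trivial] using hB.dotProduct_mulVec_pos this

lemma aux_posDef_conj {m p : Type*} [Fintype m] [Fintype p] [DecidableEq p]
    {A : Matrix m m ℝ} (hA : A.PosDef) {B : Matrix m p ℝ} (hB : Bᵀ * B = 1) :
    (Bᵀ * A * B).PosDef := by
  have hAe : Aᵀ = A := hA.isHermitian
  refine posDef_iff_dotProduct_mulVec.mpr ⟨?_, ?_⟩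
  · show (Bᵀ * A * B)ᴴ = _
    rw [conjTranspose_eq_transpose_of_trivial]
    rw [Matrix.transpose_mul, Matrix.transpose_mul, transpose_transpose, hAe, Matrix.mul_assoc]
  · intro x hx
    have hBx : B *ᵥ x ≠ 0 := by
      intro h
      apply hx
      have : Bᵀ *ᵥ (B *ᵥ x) = x := by
        rw [Matrix.mulVec_mulVec, hB, Matrix.one_mulVec]
      rw [h, Matrix.mulVec_zero] at this
      exact this.symm
    have := hA.dotProduct_mulVec_pos hBx
    simpa [star_trivial, ← Matrix.mulVec_mulVec, Matrix.dotProduct_mulVec,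
      Matrix.vecMul_transpose, Matrix.mul_assoc] using this


/-- with K positive definite, 𝕏 = diag(X_1,...,X_l) block-diagonal with
Stiefel blocks, and X⊥ an orthonormal completion of 𝕏, the modified marginal
log-likelihood objective satisfies
n log|K| + log|𝕏ᵀ (K⁻¹ ⊗ I_n) 𝕏| = log|X⊥ᵀ (K ⊗ I_n) X⊥|;
in particular it tends to −∞ as K tends to a singular matrix, so maximizing the
modified marginal likelihood selects a singular covariance matrix. -/
theorem stmt18 (n k l : ℕ)
    (K : Matrix (Fin l) (Fin l) ℝ) (hK : K.PosDef)
    (X : Fin l → Matrix (Fin n) (Fin k) ℝ) (hX : ∀ i, (X i)ᵀ * X i = 1)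
    (ι : Type*) [Fintype ι] [DecidableEq ι]
    (Xp : Matrix (Fin n × Fin l) ι ℝ)
    (hXp : Xpᵀ * Xp = 1)
    (horth : Xpᵀ * Matrix.blockDiagonal X = 0)
    (hcompl : Matrix.blockDiagonal X * (Matrix.blockDiagonal X)ᵀ + Xp * Xpᵀ = 1) :
    (n : ℝ) * Real.log K.det
        + Real.log (((Matrix.blockDiagonal X)ᵀ
            * ((1 : Matrix (Fin n) (Fin n) ℝ) ⊗ₖ K⁻¹)
            * Matrix.blockDiagonal X).det)
      = Real.log ((Xpᵀ * ((1 : Matrix (Fin n) (Fin n) ℝ) ⊗ₖ K) * Xp).det) := by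
  set 𝕏 := Matrix.blockDiagonal X with h𝕏
  have h1 : 𝕏ᵀ * 𝕏 = 1 := by
    rw [h𝕏, Matrix.blockDiagonal_transpose, ← Matrix.blockDiagonal_mul]
    simp only [hX]
    exact Matrix.blockDiagonal_one
  have horth' : 𝕏ᵀ * Xp = 0 := by
    have := congrArg Matrix.transpose horth
    simpa [Matrix.transpose_mul] using this
  set A := (1 : Matrix (Fin n) (Fin n) ℝ) ⊗ₖ K with hA
  have hAdet : A.det = K.det ^ n := by
    rw [hA, Matrix.det_kronecker]
    simp
  have hKdet : (0 : ℝ) < K.det := hK.det_pos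
  have hAinv : A⁻¹ = (1 : Matrix (Fin n) (Fin n) ℝ) ⊗ₖ K⁻¹ := by
    rw [hA, Matrix.inv_kronecker]
    simp
  have hApd : A.PosDef := aux_posDef_kron (n := n) hK
  have hAipd : A⁻¹.PosDef := hApd.inv
  have hAA : A * A⁻¹ = 1 :=
    Matrix.mul_nonsing_inv _ (by rw [hAdet]; exact (pow_ne_zero _ hKdet.ne').isUnit)
  set F := Matrix.fromCols 𝕏 Xp with hF
  have hFtF : Fᵀ * F = 1 := by
    rw [hF, Matrix.transpose_fromCols, Matrix.fromRows_mul_fromCols, h1, horth',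
      horth, hXp, Matrix.fromBlocks_one]
  have hFFt : F * Fᵀ = 1 := by
    rw [hF, Matrix.transpose_fromCols, Matrix.fromCols_mul_fromRows]
    exact hcompl
  have hcard : Fintype.card ((Fin k × Fin l) ⊕ ι) = Fintype.card (Fin n × Fin l) := by
    have t := Matrix.trace_mul_comm Fᵀ F
    rw [hFtF, hFFt, Matrix.trace_one, Matrix.trace_one] at t
    exact_mod_cast t
  obtain ⟨e⟩ := Fintype.card_eq.mp hcard
  set Q := F.submatrix _root_.id ⇑e.symm with hQ
  have hconj : ∀ S : Matrix (Fin n × Fin l) (Fin n × Fin l) ℝ,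
      (Fᵀ * S * F).submatrix ⇑e.symm ⇑e.symm = Qᵀ * (S * Q) := by
    intro S
    rw [Matrix.mul_assoc,
      Matrix.submatrix_mul Fᵀ (S * F) ⇑e.symm _root_.id ⇑e.symm Function.bijective_id,
      Matrix.submatrix_mul S F _root_.id _root_.id ⇑e.symm Function.bijective_id,
      Matrix.submatrix_id_id, hQ, Matrix.transpose_submatrix]
  have hQQ : Qᵀ * Q = 1 := by
    have h2 := hconj 1
    rw [Matrix.mul_one, hFtF, Matrix.submatrix_one_equiv, Matrix.one_mul] at h2
    exact h2.symm
  have key : ∀ S : Matrix (Fin n × Fin l) (Fin n × Fin l) ℝ, (Fᵀ * S * F).det = S.det := by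
    intro S
    have hdetQ : Qᵀ.det * Q.det = 1 := by rw [← Matrix.det_mul, hQQ, Matrix.det_one]
    calc (Fᵀ * S * F).det
        = ((Fᵀ * S * F).submatrix ⇑e.symm ⇑e.symm).det :=
          (Matrix.det_submatrix_equiv_self e.symm _).symm
      _ = (Qᵀ * (S * Q)).det := by rw [hconj]
      _ = S.det * (Qᵀ.det * Q.det) := by rw [Matrix.det_mul, Matrix.det_mul]; ring
      _ = S.det := by rw [hdetQ, mul_one]
  set N := 𝕏 * 𝕏ᵀ + A * (Xp * Xpᵀ) with hN
  set M := Xp * Xpᵀ + A⁻¹ * (𝕏 * 𝕏ᵀ) with hM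
  have hAM : A * M = N := by
    rw [hM, hN, Matrix.mul_add, ← Matrix.mul_assoc A A⁻¹, hAA, Matrix.one_mul, add_comm]
  have hN1 : N * 𝕏 = 𝕏 := by
    rw [hN, Matrix.add_mul, Matrix.mul_assoc 𝕏, h1, Matrix.mul_one, Matrix.mul_assoc A,
      Matrix.mul_assoc Xp, horth, Matrix.mul_zero, Matrix.mul_zero, add_zero]
  have hN2 : N * Xp = A * Xp := by
    rw [hN, Matrix.add_mul, Matrix.mul_assoc 𝕏, horth', Matrix.mul_zero, Matrix.mul_assoc A,
      Matrix.mul_assoc Xp, hXp, Matrix.mul_one, zero_add]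
  have hNF : N * F = Matrix.fromCols 𝕏 (A * Xp) := by
    rw [hF, Matrix.mul_fromCols, hN1, hN2]
  have hM1 : M * 𝕏 = A⁻¹ * 𝕏 := by
    rw [hM, Matrix.add_mul, Matrix.mul_assoc Xp, horth, Matrix.mul_zero,
      Matrix.mul_assoc A⁻¹, Matrix.mul_assoc 𝕏, h1, Matrix.mul_one, zero_add]
  have hM2 : M * Xp = Xp := by
    rw [hM, Matrix.add_mul, Matrix.mul_assoc Xp, hXp, Matrix.mul_one, Matrix.mul_assoc A⁻¹,
      Matrix.mul_assoc 𝕏, horth', Matrix.mul_zero, Matrix.mul_zero, add_zero]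
  have hMF : M * F = Matrix.fromCols (A⁻¹ * 𝕏) Xp := by
    rw [hF, Matrix.mul_fromCols, hM1, hM2]
  have hdetN : N.det = (Xpᵀ * A * Xp).det := by
    have : Fᵀ * N * F = Matrix.fromBlocks 1 (𝕏ᵀ * (A * Xp)) 0 (Xpᵀ * (A * Xp)) := by
      rw [Matrix.mul_assoc, hNF, hF, Matrix.transpose_fromCols,
        Matrix.fromRows_mul_fromCols, h1, horth]
    rw [← key N, this, Matrix.det_fromBlocks_zero₂₁, Matrix.det_one, one_mul,
      Matrix.mul_assoc]
  have hdetM : M.det = (𝕏ᵀ * A⁻¹ * 𝕏).det := by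
    have : Fᵀ * M * F = Matrix.fromBlocks (𝕏ᵀ * (A⁻¹ * 𝕏)) 0 (Xpᵀ * (A⁻¹ * 𝕏)) 1 := by
      rw [Matrix.mul_assoc, hMF, hF, Matrix.transpose_fromCols,
        Matrix.fromRows_mul_fromCols, horth', hXp]
    rw [← key M, this, Matrix.det_fromBlocks_zero₁₂, Matrix.det_one, mul_one,
      Matrix.mul_assoc]
  have hMpd : (𝕏ᵀ * A⁻¹ * 𝕏).PosDef := aux_posDef_conj hAipd h1
  have hdetrel : (Xpᵀ * A * Xp).det = A.det * (𝕏ᵀ * A⁻¹ * 𝕏).det := by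
    rw [← hdetN, ← hAM, Matrix.det_mul, hdetM]
  rw [← hAinv, hdetrel, Real.log_mul (by rw [hAdet]; exact pow_ne_zero _ hKdet.ne')
    hMpd.det_pos.ne', hAdet, Real.log_pow]
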